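/- Let T be a measure-preserving map on a probability space (X, ℱ, μ) and ζ a finite measurable partition of X. For every n ≥ 1 and every x ∈ X one has τ(ζ_{n-1}(Tx)) ≤ τ(ζ_n(x)); consequently the lower and upper local rates of Poincaré recurrence are sub-invariant: R̲_ζ(Tx) ≤ R̲_ζ(x) and R̄_ζ(Tx) ≤ R̄_ζ(x) for all x ∈ X. -/

import Mathlib

open MeasureTheory Filter Set
open scoped ENNReal

/-- The Poincaré recurrence of a set `U` : `τ(U) = inf {k ≥ 1 : T^k U ∩ U ≠ ∅}`
(`∞` if no such `k` exists). -/
noncomputable def recOfSet {X : Type*} (T : X → X) (U : Set X) : ℝ≥0∞ :=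
  sInf {t : ℝ≥0∞ | ∃ k : ℕ, 1 ≤ k ∧ (T^[k] '' U ∩ U).Nonempty ∧ t = k}

/-- `refAtom T P n x` is the atom containing `x` of the refined partition
`ζ ∨ T⁻¹ζ ∨ ⋯ ∨ T^{-n+1}ζ`, where `ζ` is the partition of `X` into the fibers
of the map `P`. -/
def refAtom {X ι : Type*} (T : X → X) (P : X → ι) (n : ℕ) (x : X) : Set X :=
  {y | ∀ k < n, P (T^[k] y) = P (T^[k] x)}

/-- The lower local rate of Poincaré recurrence `R̲_ζ(x) = liminf_n τ(ζ_n(x))/n`. -/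
noncomputable def lowerRate {X ι : Type*} (T : X → X) (P : X → ι) (x : X) : ℝ≥0∞ :=
  atTop.liminf fun n : ℕ => recOfSet T (refAtom T P n x) / (n : ℝ≥0∞)

/-- The upper local rate of Poincaré recurrence `R̄_ζ(x) = limsup_n τ(ζ_n(x))/n`. -/
noncomputable def upperRate {X ι : Type*} (T : X → X) (P : X → ι) (x : X) : ℝ≥0∞ :=
  atTop.limsup fun n : ℕ => recOfSet T (refAtom T P n x) / (n : ℝ≥0∞)

open scoped NNReal

lemma rec_mono {X : Type*} (T : X → X) {U V : Set X} (h : T '' U ⊆ V) :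
    recOfSet T V ≤ recOfSet T U := by
  apply sInf_le_sInf
  rintro t ⟨k, hk, ⟨z, ⟨y, hyU, hyz⟩, hzU⟩, ht⟩
  refine ⟨k, hk, ⟨T z, ⟨T y, h ⟨y, hyU, rfl⟩, ?_⟩, h ⟨z, hzU, rfl⟩⟩, ht⟩
  rw [← hyz, ← Function.iterate_succ_apply, Function.iterate_succ_apply']

lemma image_refAtom {X ι : Type*} (T : X → X) (P : X → ι) (n : ℕ) (x : X) :
    T '' refAtom T P (n + 1) x ⊆ refAtom T P n (T x) := by
  rintro _ ⟨y, hy, rfl⟩ k hk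
  rw [← Function.iterate_succ_apply, ← Function.iterate_succ_apply]
  exact hy (k + 1) (by omega)

lemma key_ev (u v : ℕ → ℝ≥0∞) (h : ∀ n, u n ≤ v (n + 1)) {L : ℝ≥0∞} (hL : L < ∞)
    {ε : ℝ≥0} (hε : 0 < ε) :
    ∀ᶠ n : ℕ in atTop, v n / n ≤ L + (ε : ℝ≥0∞) / 2 →
      u (n - 1) / ((n - 1 : ℕ) : ℝ≥0∞) ≤ L + ε := by
  have hε2 : ((ε : ℝ≥0∞) / 2) ≠ 0 := by
    simp [ENNReal.div_eq_zero_iff, hε.ne']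
  have hc : L + (ε : ℝ≥0∞) / 2 ≠ ∞ := by
    exact ENNReal.add_ne_top.2 ⟨hL.ne, by simp [ENNReal.div_eq_top]⟩
  obtain ⟨N, hN⟩ := ENNReal.exists_nat_gt (show (L + (ε : ℝ≥0∞) / 2) / ((ε : ℝ≥0∞) / 2) ≠ ∞ by simp [ENNReal.div_eq_top, hε2, hc])
  filter_upwards [eventually_ge_atTop (N + 2)] with n hn hv
  set m := n - 1 with hm
  have hm1 : 1 ≤ m := by omega
  have hmN : N ≤ m := by omega
  have hn' : n = m + 1 := by omega
  have hvm : v (m + 1) ≤ (L + (ε : ℝ≥0∞) / 2) * (m + 1) := by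
    rw [hn'] at hv
    have := (ENNReal.div_le_iff_le_mul (b := ((m + 1 : ℕ) : ℝ≥0∞))
      (Or.inl (by exact_mod_cast Nat.succ_ne_zero m)) (Or.inl (by simp))).1 hv
    simpa using this
  have hkey : (L + (ε : ℝ≥0∞) / 2) ≤ ((ε : ℝ≥0∞) / 2) * m := by
    calc (L + (ε : ℝ≥0∞) / 2)
        = (L + (ε : ℝ≥0∞) / 2) / ((ε : ℝ≥0∞) / 2) * ((ε : ℝ≥0∞) / 2) :=
          (ENNReal.div_mul_cancel hε2 (by simp [ENNReal.div_eq_top])).symm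
      _ ≤ (N : ℝ≥0∞) * ((ε : ℝ≥0∞) / 2) := by
          exact mul_le_mul_left hN.le _
      _ ≤ ((ε : ℝ≥0∞) / 2) * m := by
          rw [mul_comm]
          exact mul_le_mul_right (by exact_mod_cast hmN) _
  have hum : u m ≤ (L + ε) * m := by
    calc u m ≤ v (m + 1) := h m
      _ ≤ (L + (ε : ℝ≥0∞) / 2) * (m + 1) := hvm
      _ = (L + (ε : ℝ≥0∞) / 2) * m + (L + (ε : ℝ≥0∞) / 2) := by ring
      _ ≤ (L + (ε : ℝ≥0∞) / 2) * m + ((ε : ℝ≥0∞) / 2) * m := add_le_add_right hkey _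
      _ = (L + (ε : ℝ≥0∞) / 2 + (ε : ℝ≥0∞) / 2) * m := by ring
      _ = (L + ε) * m := by rw [add_assoc, ENNReal.add_halves]
  rw [ENNReal.div_le_iff_le_mul (Or.inl (by exact_mod_cast (by omega : m ≠ 0)))
    (Or.inl (by simp))]
  exact hum

lemma liminf_key (u v : ℕ → ℝ≥0∞) (h : ∀ n, u n ≤ v (n + 1)) :
    atTop.liminf (fun n : ℕ => u n / (n : ℝ≥0∞)) ≤
      atTop.liminf (fun n : ℕ => v n / (n : ℝ≥0∞)) := by
  set L := atTop.liminf (fun n : ℕ => v n / (n : ℝ≥0∞)) with hLdef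
  apply ENNReal.le_of_forall_pos_le_add
  intro ε hε hL
  have hε2 : ((ε : ℝ≥0∞) / 2) ≠ 0 := by
    simp [ENNReal.div_eq_zero_iff, hε.ne']
  have hlt : atTop.liminf (fun n : ℕ => v n / (n : ℝ≥0∞)) < L + (ε : ℝ≥0∞) / 2 := by
    rw [← hLdef]; exact ENNReal.lt_add_right hL.ne hε2
  have hfreq : ∃ᶠ n : ℕ in atTop, v n / n ≤ L + (ε : ℝ≥0∞) / 2 :=
    (frequently_lt_of_liminf_lt (h := hlt)).mono fun n hn => hn.le
  have hfr2 : ∃ᶠ n : ℕ in atTop,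
      u (n - 1) / ((n - 1 : ℕ) : ℝ≥0∞) ≤ L + ε :=
    (hfreq.and_eventually (key_ev u v h hL hε)).mono fun n hn => hn.2 hn.1
  have hsh := liminf_nat_add (fun m : ℕ => u (m - 1) / ((m - 1 : ℕ) : ℝ≥0∞)) 1
  simp only [Nat.add_sub_cancel] at hsh
  rw [hsh]
  exact liminf_le_of_frequently_le' hfr2

lemma limsup_key (u v : ℕ → ℝ≥0∞) (h : ∀ n, u n ≤ v (n + 1)) :
    atTop.limsup (fun n : ℕ => u n / (n : ℝ≥0∞)) ≤
      atTop.limsup (fun n : ℕ => v n / (n : ℝ≥0∞)) := by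
  set L := atTop.limsup (fun n : ℕ => v n / (n : ℝ≥0∞)) with hLdef
  apply ENNReal.le_of_forall_pos_le_add
  intro ε hε hL
  have hε2 : ((ε : ℝ≥0∞) / 2) ≠ 0 := by
    simp [ENNReal.div_eq_zero_iff, hε.ne']
  have hlt : atTop.limsup (fun n : ℕ => v n / (n : ℝ≥0∞)) < L + (ε : ℝ≥0∞) / 2 := by
    rw [← hLdef]; exact ENNReal.lt_add_right hL.ne hε2
  have hev : ∀ᶠ n : ℕ in atTop, v n / n ≤ L + (ε : ℝ≥0∞) / 2 :=
    (eventually_lt_of_limsup_lt (h := hlt)).mono fun n hn => hn.le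
  have hev2 : ∀ᶠ n : ℕ in atTop,
      u (n - 1) / ((n - 1 : ℕ) : ℝ≥0∞) ≤ L + ε :=
    (hev.and (key_ev u v h hL hε)).mono fun n hn => hn.2 hn.1
  have hsh := limsup_nat_add (fun m : ℕ => u (m - 1) / ((m - 1 : ℕ) : ℝ≥0∞)) 1
  simp only [Nat.add_sub_cancel] at hsh
  rw [hsh]
  exact limsup_le_of_le (by isBoundedDefault) hev2


/-- For every `n ≥ 1` and every `x`, `τ(ζ_{n-1}(Tx)) ≤ τ(ζ_n(x))`;
consequently the lower and upper local rates of Poincaré recurrence are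
sub-invariant. -/
theorem stmt1 {X ι : Type*} [MeasurableSpace X] [Fintype ι]
    (μ : Measure X) [IsProbabilityMeasure μ]
    (T : X → X) (hT : MeasurePreserving T μ μ)
    (P : X → ι) (hP : ∀ i, MeasurableSet (P ⁻¹' {i})) :
    (∀ n : ℕ, 1 ≤ n → ∀ x : X,
        recOfSet T (refAtom T P (n - 1) (T x)) ≤ recOfSet T (refAtom T P n x)) ∧
      (∀ x : X, lowerRate T P (T x) ≤ lowerRate T P x) ∧
      (∀ x : X, upperRate T P (T x) ≤ upperRate T P x) := by
  have hrec : ∀ (n : ℕ) (x : X),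
      recOfSet T (refAtom T P n (T x)) ≤ recOfSet T (refAtom T P (n + 1) x) :=
    fun n x => rec_mono T (image_refAtom T P n x)
  refine ⟨fun n hn x => ?_, fun x => ?_, fun x => ?_⟩
  · obtain ⟨m, rfl⟩ : ∃ m, n = m + 1 := ⟨n - 1, by omega⟩
    simpa using hrec m x
  · exact liminf_key _ _ (fun n => hrec n x)
  · exact limsup_key _ _ (fun n => hrec n x)
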